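/- arXiv:1910.13109 — 3 statements merged into one kernel-verified Lean document; each statement's English description precedes it below -/
import Mathlib

section
/- Let G be a finite group with subgroup H, let N be a finite group on which G acts by automorphisms, and let φ be a finite-dimensional complex representation of H ⋉ N. Then the induced representation Ind_H^G (φ|_H) of G is isomorphic, as a representation of G, to the restriction to G of the induced representation Ind_{H ⋉ N}^{G ⋉ N} φ. -/
/-- The space of the representation of `G` induced along `ι : H →* G`
(for `ι` the inclusion of a subgroup, this is the classical induced
representation `Ind_H^G σ`). -/
def IndSpace {H G : Type*} [Group H] [Group G] (ι : H →* G)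
    {V : Type*} [AddCommGroup V] [Module ℂ V] (σ : Representation ℂ H V) :
    Submodule ℂ (G → V) where
  carrier := {f | ∀ (h : H) (g : G), f (ι h * g) = σ h (f g)}
  add_mem' := by
    intro a b ha hb h g
    simp [ha h g, hb h g]
  zero_mem' := by
    intro h g
    simp
  smul_mem' := by
    intro c a ha h g
    simp [ha h g]

/-- The representation of `G` induced along `ι : H →* G` from `σ`. -/
def Ind {H G : Type*} [Group H] [Group G] (ι : H →* G)
    {V : Type*} [AddCommGroup V] [Module ℂ V] (σ : Representation ℂ H V) :
    Representation ℂ G (IndSpace ι σ) where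
  toFun g :=
    { toFun := fun f => ⟨fun x => (f : G → V) (x * g), by
        intro h x
        simpa [mul_assoc] using f.2 h (x * g)⟩
      map_add' := by intro f₁ f₂; ext x; simp
      map_smul' := by intro c f; ext x; simp }
  map_one' := by ext f x; simp
  map_mul' := by intro g₁ g₂; ext f x; simp [mul_assoc]

/-- Equivalence (isomorphism) of representations. -/
def RepEquiv {G : Type*} [Group G] {V W : Type*} [AddCommGroup V] [Module ℂ V]
    [AddCommGroup W] [Module ℂ W]
    (ρ : Representation ℂ G V) (τ : Representation ℂ G W) : Prop :=
  ∃ e : V ≃ₗ[ℂ] W, ∀ (g : G) (v : V), e (ρ g v) = τ g (e v)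

/-- The canonical embedding of `H ⋉ N` into `G ⋉ N` for a subgroup `H ≤ G`,
realizing `H ⋉ N` as the corresponding subgroup of `G ⋉ N`. -/
def sdInclusion {G N : Type*} [Group G] [Group N] (α : G →* MulAut N) (H : Subgroup G) :
    (N ⋊[α.comp H.subtype] H) →* (N ⋊[α] G) :=
  SemidirectProduct.map (MonoidHom.id N) H.subtype (fun _ => rfl)

/-- Let `H` be a subgroup of a finite group `G`, let `G` act on a
finite group `N` by automorphisms, and let `φ` be a finite-dimensional complex
representation of `H ⋉ N`.  Then `Ind_H^G (φ|_H)` is isomorphic, as a representation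
of `G`, to the restriction to `G` of `Ind_{H ⋉ N}^{G ⋉ N} φ`. -/
theorem ind_restrict_semidirect {G N V : Type*} [Group G] [Finite G] [Group N] [Finite N]
    (α : G →* MulAut N) (H : Subgroup G)
    [AddCommGroup V] [Module ℂ V] [FiniteDimensional ℂ V]
    (φ : Representation ℂ (N ⋊[α.comp H.subtype] H) V) :
    RepEquiv (Ind H.subtype (φ.comp SemidirectProduct.inr))
      ((Ind (sdInclusion α H) φ).comp SemidirectProduct.inr) := by
  classical
  have key : ∀ (n : N) (h : H),
      (SemidirectProduct.inl ((α.comp H.subtype) h n) :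
        N ⋊[α.comp H.subtype] H) * SemidirectProduct.inr h
        = SemidirectProduct.inr h * SemidirectProduct.inl n := by
    intro n h
    rw [SemidirectProduct.inl_aut, mul_assoc, mul_assoc, ← map_mul, inv_mul_cancel,
      map_one, mul_one]
  refine ⟨{
    toFun := fun f => ⟨fun x => φ (SemidirectProduct.inl x.left) ((f : G → V) x.right), ?_⟩
    map_add' := ?_
    map_smul' := ?_
    invFun := fun g => ⟨fun x => (g : (N ⋊[α] G) → V) (SemidirectProduct.inr x), ?_⟩
    left_inv := ?_
    right_inv := ?_ }, ?_⟩
  · intro h x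
    have hf : (f : G → V) ((h.right : G) * x.right)
        = φ (SemidirectProduct.inr h.right) ((f : G → V) x.right) := f.2 h.right x.right
    have hleft : ((sdInclusion α H h) * x).left
        = h.left * (α.comp H.subtype) h.right x.left := rfl
    have hright : ((sdInclusion α H h) * x).right = (h.right : G) * x.right := rfl
    show φ (SemidirectProduct.inl ((sdInclusion α H h * x).left))
        ((f : G → V) ((sdInclusion α H h * x).right))
        = φ h (φ (SemidirectProduct.inl x.left) ((f : G → V) x.right))
    rw [hleft, hright, hf]
    have e1 : (SemidirectProduct.inl (h.left * (α.comp H.subtype) h.right x.left) :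
        N ⋊[α.comp H.subtype] H) * SemidirectProduct.inr h.right
        = h * SemidirectProduct.inl x.left := by
      rw [map_mul, mul_assoc, key, ← mul_assoc, SemidirectProduct.inl_left_mul_inr_right]
    have e2 := congrArg φ e1
    rw [map_mul, map_mul] at e2
    have e3 := LinearMap.congr_fun e2 ((f : G → V) x.right)
    simpa [Module.End.mul_apply] using e3
  · intro f₁ f₂; ext x; simp
  · intro c f; ext x; simp
  · intro h x
    have hg := g.2 (SemidirectProduct.inr h) (SemidirectProduct.inr x)
    have h1 : sdInclusion α H (SemidirectProduct.inr h) =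
        SemidirectProduct.inr (h : G) := by simp [sdInclusion]
    rw [h1, ← map_mul] at hg
    simpa using hg
  · intro f
    ext x
    simp only
    have h2 : ((SemidirectProduct.inr x : N ⋊[α] G)).left = 1 := rfl
    have h3 : ((SemidirectProduct.inr x : N ⋊[α] G)).right = x := rfl
    rw [h2, h3]
    simp
  · intro g
    ext x
    simp only
    have hg := g.2 (SemidirectProduct.inl x.left) (SemidirectProduct.inr x.right)
    have h1 : sdInclusion α H (SemidirectProduct.inl x.left) =
        SemidirectProduct.inl x.left := by simp [sdInclusion]
    rw [h1, SemidirectProduct.inl_left_mul_inr_right] at hg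
    exact hg.symm
  · intro g f
    ext x
    show φ (SemidirectProduct.inl x.left) ((f : G → V) (x.right * g))
        = φ (SemidirectProduct.inl (x * (SemidirectProduct.inr g : N ⋊[α] G)).left)
        ((f : G → V) ((x * (SemidirectProduct.inr g : N ⋊[α] G)).right))
    have hl : (x * (SemidirectProduct.inr g : N ⋊[α] G)).left = x.left := by
      simp [SemidirectProduct.mul_left]
    have hr : (x * (SemidirectProduct.inr g : N ⋊[α] G)).right = x.right * g := rfl
    rw [hl, hr]
end

section
/- Let F be a finite field of odd characteristic and let ψ : (F, +) → ℂ^× be a group homomorphism. Let W_n = F^{2n} be the standard symplectic space with symplectic basis e₁, …, e_n, e′_n, …, e′_1 (so ⟨e_i, e′_j⟩ = δ_{ij} and ⟨e_i, e_j⟩ = ⟨e′_i, e′_j⟩ = 0), let 0 ≤ k ≤ n, let X_k be the span of e₁, …, e_k, let X̌_k be the span of e′_1, …, e′_k, and let W_{n−k} be the span of e_{k+1}, …, e_n, e′_n, …, e′_{k+1}, so that every w ∈ W_n is uniquely w = x + w₀ + x̌ with x ∈ X_k, w₀ ∈ W_{n−k}, x̌ ∈ X̌_k. Let (ρ₀,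 S) be a finite-dimensional complex representation of the Heisenberg group H(W_{n−k}) (for the restriction of the symplectic form) with ρ₀(0, t) = ψ(t)·id_S for all t ∈ F. Then the formula (ρ(w, t) f)(y̌) = ψ(⟨y̌, x⟩ + ⟨x̌, x⟩/2 + t) · ρ₀(w₀, 0)(f(x̌ + y̌)), for f in the space S(X̌_k, S) of S-valued functions on X̌_k and y̌ ∈ X̌_k, defines a representation ρ of the Heisenberg group H(W_n) on S(X̌_k, S) satisfying ρ(0, t) = ψ(t)·id for all t ∈ F; moreover, if ψ is nontrivial and ρ₀ is irreducible, then ρ is irreducible. -/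
/-- The Heisenberg group of a bilinear form `β` on `V`: the set `V × F` with
multiplication `(v, t) (v', t') = (v + v', t + t' + β v v' / 2)`. -/
@[ext]
structure Heisenberg {F V : Type*} [Field F] [AddCommGroup V] [Module F V]
    (β : V →ₗ[F] V →ₗ[F] F) where
  v : V
  t : F

namespace Heisenberg

variable {F V : Type*} [Field F] [AddCommGroup V] [Module F V] {β : V →ₗ[F] V →ₗ[F] F}

/-- Multiplication in the Heisenberg group. -/
def mul (a b : Heisenberg β) : Heisenberg β :=
  ⟨a.v + b.v, a.t + b.t + β a.v b.v / 2⟩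

/-- Identity element of the Heisenberg group. -/
def one : Heisenberg β := ⟨0, 0⟩

/-- Inverse in the Heisenberg group (for an alternating form `β` this is
`(v, t)⁻¹ = (-v, -t)`). -/
def inv (a : Heisenberg β) : Heisenberg β := ⟨-a.v, -a.t + β a.v a.v / 2⟩

instance : Group (Heisenberg β) where
  mul := mul
  one := one
  inv := inv
  mul_assoc a b c := by
    show mul (mul a b) c = mul a (mul b c)
    unfold mul
    ext
    · exact add_assoc _ _ _
    · simp only [map_add, LinearMap.add_apply]
      ring
  one_mul a := by
    show mul one a = a
    unfold mul one
    ext <;> simp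
  mul_one a := by
    show mul a one = a
    unfold mul one
    ext <;> simp
  inv_mul_cancel a := by
    show mul (inv a) a = one
    unfold mul inv one
    ext
    · simp
    · simp only [map_neg, LinearMap.neg_apply]
      ring

end Heisenberg

/-- A representation is irreducible if the underlying space is nonzero and its
only invariant subspaces are `⊥` and `⊤`. -/
def IsIrreducibleRep {G V : Type*} [Group G] [AddCommGroup V] [Module ℂ V]
    (ρ : Representation ℂ G V) : Prop :=
  Nontrivial V ∧ ∀ p : Submodule ℂ V, (∀ g : G, ∀ x ∈ p, ρ g x ∈ p) → p = ⊥ ∨ p = ⊤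

/-- The dot-product pairing on `Fin m → F`. -/
noncomputable def dotForm (F : Type*) [Field F] (m : ℕ) :
    (Fin m → F) →ₗ[F] (Fin m → F) →ₗ[F] F :=
  LinearMap.mk₂ F (fun a b => ∑ i, a i * b i)
    (fun a a' b => by simp [add_mul, Finset.sum_add_distrib])
    (fun c a b => by simp [Finset.mul_sum, mul_assoc])
    (fun a b b' => by simp [mul_add, Finset.sum_add_distrib])
    (fun c a b => by simp [Finset.mul_sum]; ring_nf; simp [mul_comm, mul_left_comm])

/-- The standard symplectic form on `F^{2m} = (Fin m → F) × (Fin m → F)`,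
with `⟨e_i, e'_j⟩ = δ_{ij}` for the standard symplectic basis `e_i = (δ_i, 0)`,
`e'_j = (0, δ_j)`. -/
noncomputable def symplForm (F : Type*) [Field F] (m : ℕ) :
    ((Fin m → F) × (Fin m → F)) →ₗ[F] ((Fin m → F) × (Fin m → F)) →ₗ[F] F :=
  LinearMap.mk₂ F (fun w w' => dotForm F m w.1 w'.2 - dotForm F m w'.1 w.2)
    (fun a a' b => by simp [map_add, LinearMap.add_apply]; ring)
    (fun c a b => by simp; ring)
    (fun a b b' => by simp [map_add, LinearMap.add_apply]; ring)
    (fun c a b => by simp; ring)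

/-- The standard symplectic space `W_n = F^{2n}`, written in coordinates adapted to
the Witt decomposition `W_n = X_k ⊕ W_{n-k} ⊕ X̌_k`: an element is a triple
`(x, w₀, x̌)` with `x ∈ X_k = F^k` (coordinates in `e₁, …, e_k`),
`w₀ ∈ W_{n-k} = F^{2(n-k)}` (coordinates in `e_{k+1}, …, e_n, e′_n, …, e′_{k+1}`)
and `x̌ ∈ X̌_k = F^k` (coordinates in `e′_1, …, e′_k`). -/
abbrev WittSpace (F : Type*) [Field F] (n k : ℕ) : Type _ :=
  (Fin k → F) × ((Fin (n - k) → F) × (Fin (n - k) → F)) × (Fin k → F)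

/-- The standard symplectic form on `W_n` in the above coordinates; it satisfies
`⟨e_i, e′_j⟩ = δ_{ij}` and `⟨e_i, e_j⟩ = ⟨e′_i, e′_j⟩ = 0`. -/
noncomputable def wittForm (F : Type*) [Field F] (n k : ℕ) :
    WittSpace F n k →ₗ[F] WittSpace F n k →ₗ[F] F :=
  LinearMap.mk₂ F
    (fun w w' => dotForm F k w.1 w'.2.2 - dotForm F k w'.1 w.2.2 +
      symplForm F (n - k) w.2.1 w'.2.1)
    (fun a a' b => by simp [map_add, LinearMap.add_apply]; ring)
    (fun c a b => by simp; ring)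
    (fun a b b' => by simp [map_add, LinearMap.add_apply]; ring)
    (fun c a b => by simp; ring)

section MixedSchrodingerAux

open Finset

lemma heis_mul_def {F V : Type*} [Field F] [AddCommGroup V] [Module F V]
    {β : V →ₗ[F] V →ₗ[F] F} (a b : Heisenberg β) :
    a * b = ⟨a.v + b.v, a.t + b.t + β a.v b.v / 2⟩ := rfl

lemma heis_one_def {F V : Type*} [Field F] [AddCommGroup V] [Module F V]
    {β : V →ₗ[F] V →ₗ[F] F} : (1 : Heisenberg β) = ⟨0, 0⟩ := rfl

lemma char_sum_zero {F : Type*} [Field F] [Fintype F] (ψ : AddChar F ℂ)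
    (hψ : ∃ t : F, ψ t ≠ 1) {k : ℕ} (a : Fin k → F) (ha : a ≠ 0) :
    ∑ x : Fin k → F, ψ (∑ i, x i * a i) = 0 := by
  classical
  obtain ⟨j, hj⟩ := Function.ne_iff.mp ha
  obtain ⟨t, ht⟩ := hψ
  have hj' : a j ≠ 0 := by simpa using hj
  set c : Fin k → F := Pi.single j (t / a j) with hc
  have hcsum : ∑ i, c i * a i = t := by
    rw [hc, Finset.sum_eq_single j]
    · simp [Pi.single_eq_same, div_mul_cancel₀ t hj']
    · intro i _ hij; simp [Pi.single_eq_of_ne hij]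
    · simp
  have hshift : ∀ x : Fin k → F, ψ (∑ i, (x + c) i * a i) = ψ t * ψ (∑ i, x i * a i) := by
    intro x
    have h1 : ∑ i, (x + c) i * a i = (∑ i, x i * a i) + t := by
      simp [add_mul, Finset.sum_add_distrib, hcsum]
    rw [h1, AddChar.map_add_eq_mul, mul_comm]
  have hbij : ∑ x : Fin k → F, ψ (∑ i, (x + c) i * a i)
      = ∑ x : Fin k → F, ψ (∑ i, x i * a i) :=
    Fintype.sum_bijective (· + c) (Equiv.addRight c).bijective _ _ (fun x => rfl)
  have hkey : (1 - ψ t) * ∑ x : Fin k → F, ψ (∑ i, x i * a i) = 0 := by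
    rw [sub_mul, one_mul, sub_eq_zero, Finset.mul_sum, ← hbij]
    exact Finset.sum_congr rfl fun x _ => hshift x
  rcases mul_eq_zero.mp hkey with h | h
  · exact absurd (by linear_combination -h : ψ t = 1) ht
  · exact h

/-- The operator `ρ(g)` of the mixed Schrödinger model. -/
noncomputable def schrLin {F : Type*} [Field F] (ψ : AddChar F ℂ) (n k : ℕ)
    {S : Type*} [AddCommGroup S] [Module ℂ S]
    (ρ₀ : Representation ℂ (Heisenberg (symplForm F (n - k))) S)
    (g : Heisenberg (wittForm F n k)) : ((Fin k → F) → S) →ₗ[ℂ] ((Fin k → F) → S) where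
  toFun := fun f yv =>
    ψ (g.t - (∑ i, g.v.1 i * yv i) - (∑ i, g.v.1 i * g.v.2.2 i) / 2) •
      ρ₀ ⟨g.v.2.1, 0⟩ (f (g.v.2.2 + yv))
  map_add' f f' := by
    funext yv; simp only [Pi.add_apply, map_add, smul_add]
  map_smul' c f := by
    funext yv
    simp only [Pi.smul_apply, map_smul, RingHom.id_apply]
    rw [smul_comm]

lemma schrLin_apply {F : Type*} [Field F] (ψ : AddChar F ℂ) (n k : ℕ)
    {S : Type*} [AddCommGroup S] [Module ℂ S]
    (ρ₀ : Representation ℂ (Heisenberg (symplForm F (n - k))) S)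
    (g : Heisenberg (wittForm F n k)) (f : (Fin k → F) → S) (yv : Fin k → F) :
    schrLin ψ n k ρ₀ g f yv =
      ψ (g.t - (∑ i, g.v.1 i * yv i) - (∑ i, g.v.1 i * g.v.2.2 i) / 2) •
        ρ₀ ⟨g.v.2.1, 0⟩ (f (g.v.2.2 + yv)) := rfl

/-- Irreducibility of the mixed Schrödinger model, abstractly. -/
lemma schr_irred {F : Type*} [Field F] [Fintype F] (ψ : AddChar F ℂ) (n k : ℕ)
    {S : Type*} [AddCommGroup S] [Module ℂ S]
    (ρ₀ : Representation ℂ (Heisenberg (symplForm F (n - k))) S)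
    (hρ₀ : ∀ t : F, ρ₀ ⟨0, t⟩ = ψ t • (1 : S →ₗ[ℂ] S))
    (ρ : Representation ℂ (Heisenberg (wittForm F n k)) ((Fin k → F) → S))
    (hform : ∀ (g : Heisenberg (wittForm F n k)) (f : (Fin k → F) → S) (yv : Fin k → F),
      ρ g f yv = ψ (g.t - (∑ i, g.v.1 i * yv i) - (∑ i, g.v.1 i * g.v.2.2 i) / 2) •
        ρ₀ ⟨g.v.2.1, 0⟩ (f (g.v.2.2 + yv)))
    (hψ : ∃ t : F, ψ t ≠ 1) (hirr : IsIrreducibleRep ρ₀) : IsIrreducibleRep ρ := by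
  classical
  have hρ₀one : ρ₀ ⟨0, 0⟩ = 1 := by rw [hρ₀ 0]; simp
  have hρ₀' : ∀ (w : (Fin (n - k) → F) × (Fin (n - k) → F)) (t : F),
      ρ₀ ⟨w, t⟩ = ψ t • ρ₀ ⟨w, 0⟩ := by
    intro w t
    have h : (⟨w, t⟩ : Heisenberg (symplForm F (n - k))) = ⟨0, t⟩ * ⟨w, 0⟩ := by
      rw [heis_mul_def]; ext <;> simp
    rw [h, map_mul, hρ₀, smul_mul_assoc, one_mul]
  -- special operators
  have h_xonly : ∀ (x : Fin k → F) (f : (Fin k → F) → S) (y : Fin k → F),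
      ρ (⟨(x, 0, 0), 0⟩ : Heisenberg (wittForm F n k)) f y
        = ψ (-∑ i, x i * y i) • f y := by
    intro x f y
    rw [hform]
    simp [hρ₀one]
  have h_w0 : ∀ (w₀ : (Fin (n - k) → F) × (Fin (n - k) → F)) (t : F)
      (f : (Fin k → F) → S) (y : Fin k → F),
      ρ (⟨(0, w₀, 0), t⟩ : Heisenberg (wittForm F n k)) f y = ρ₀ ⟨w₀, t⟩ (f y) := by
    intro w₀ t f y
    rw [hform, hρ₀' w₀ t]
    simp
  have h_trans : ∀ (xv : Fin k → F) (f : (Fin k → F) → S) (y : Fin k → F),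
      ρ (⟨(0, 0, xv), 0⟩ : Heisenberg (wittForm F n k)) f y = f (xv + y) := by
    intro xv f y
    rw [hform]
    simp [hρ₀one]
  constructor
  · haveI := hirr.1
    exact Function.nontrivial
  intro p hp
  rcases eq_or_ne p ⊥ with hbot | hbot
  · exact Or.inl hbot
  right
  obtain ⟨f, hfp, hf0⟩ := (Submodule.ne_bot_iff p).mp hbot
  obtain ⟨y₀, hy₀⟩ := Function.ne_iff.mp hf0
  simp only [Pi.zero_apply] at hy₀
  -- Step A: the delta function at y₀ with value f y₀ is in p
  have hq : ((Fintype.card (Fin k → F) : ℂ)) ≠ 0 :=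
    Nat.cast_ne_zero.mpr Fintype.card_ne_zero
  have hu : (∑ x : Fin k → F, ψ (∑ i, x i * y₀ i) • ρ (⟨(x, 0, 0), 0⟩ :
      Heisenberg (wittForm F n k)) f) ∈ p :=
    Submodule.sum_mem _ fun x _ => Submodule.smul_mem _ _ (hp _ _ hfp)
  have heq : (∑ x : Fin k → F, ψ (∑ i, x i * y₀ i) • ρ (⟨(x, 0, 0), 0⟩ :
        Heisenberg (wittForm F n k)) f)
      = (Fintype.card (Fin k → F) : ℂ) • (Pi.single y₀ (f y₀) : (Fin k → F) → S) := by
    funext y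
    have key : (∑ x : Fin k → F, ψ (∑ i, x i * y₀ i) • ρ (⟨(x, 0, 0), 0⟩ :
          Heisenberg (wittForm F n k)) f) y
        = (∑ x : Fin k → F, ψ (∑ i, x i * (y₀ - y) i)) • f y := by
      rw [Finset.sum_apply, Finset.sum_smul]
      refine Finset.sum_congr rfl fun x _ => ?_
      rw [Pi.smul_apply, h_xonly, smul_smul, ← AddChar.map_add_eq_mul]
      congr 2
      rw [← sub_eq_add_neg, ← Finset.sum_sub_distrib]
      exact Finset.sum_congr rfl fun i _ => (mul_sub _ _ _).symm
    rw [key]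
    by_cases hy : y = y₀
    · subst hy
      simp [Pi.single_eq_same]
    · rw [char_sum_zero ψ hψ _ (sub_ne_zero.mpr (Ne.symm hy))]
      simp [Pi.single_eq_of_ne hy]
  have hdel : (Pi.single y₀ (f y₀) : (Fin k → F) → S) ∈ p := by
    rw [heq] at hu
    have := Submodule.smul_mem p ((Fintype.card (Fin k → F) : ℂ))⁻¹ hu
    rwa [smul_smul, inv_mul_cancel₀ hq, one_smul] at this
  -- Step B: all values at y₀
  have hMall : ∀ s : S, (Pi.single y₀ s : (Fin k → F) → S) ∈ p := by
    let M : Submodule ℂ S :=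
    { carrier := {s | (Pi.single y₀ s : (Fin k → F) → S) ∈ p}
      add_mem' := fun {a b} ha hb => by
        simp only [Set.mem_setOf_eq] at *
        rw [Pi.single_add]
        exact p.add_mem ha hb
      zero_mem' := by
        simp only [Set.mem_setOf_eq, Pi.single_zero]
        exact p.zero_mem
      smul_mem' := fun c a ha => by
        simp only [Set.mem_setOf_eq] at *
        rw [Pi.single_smul]
        exact p.smul_mem c ha }
    have hMinv : ∀ g : Heisenberg (symplForm F (n - k)), ∀ s ∈ M, ρ₀ g s ∈ M := by
      intro g s hs
      have h1 := hp (⟨(0, g.v, 0), g.t⟩ : Heisenberg (wittForm F n k)) _ hs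
      have h2 : ρ (⟨(0, g.v, 0), g.t⟩ : Heisenberg (wittForm F n k)) (Pi.single y₀ s)
          = (Pi.single y₀ (ρ₀ g s) : (Fin k → F) → S) := by
        funext y
        rw [h_w0]
        by_cases hy : y = y₀
        · subst hy; simp [Pi.single_eq_same]
        · simp [Pi.single_eq_of_ne hy]
      rwa [h2] at h1
    rcases hirr.2 M hMinv with hM0 | hMT
    · exfalso
      have : f y₀ ∈ M := hdel
      rw [hM0] at this
      exact hy₀ this
    · intro s
      have : s ∈ M := by rw [hMT]; trivial
      exact this
  -- Step C: all delta functions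
  have hall : ∀ (y₁ : Fin k → F) (s : S), (Pi.single y₁ s : (Fin k → F) → S) ∈ p := by
    intro y₁ s
    have h1 := hp (⟨(0, 0, y₀ - y₁), 0⟩ : Heisenberg (wittForm F n k)) _ (hMall s)
    have h2 : ρ (⟨(0, 0, y₀ - y₁), 0⟩ : Heisenberg (wittForm F n k)) (Pi.single y₀ s)
        = (Pi.single y₁ s : (Fin k → F) → S) := by
      funext y
      rw [h_trans]
      by_cases hy : y = y₁
      · subst hy
        rw [sub_add_cancel, Pi.single_eq_same, Pi.single_eq_same]
      · rw [Pi.single_eq_of_ne hy, Pi.single_eq_of_ne]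
        intro hcon
        apply hy
        have := eq_sub_of_add_eq' hcon
        rwa [sub_sub_cancel] at this
    rwa [h2] at h1
  -- Step D
  rw [eq_top_iff]
  intro g _
  have hg : g = ∑ y : Fin k → F, (Pi.single y (g y) : (Fin k → F) → S) := (Finset.univ_sum_single g).symm
  rw [hg]
  exact Submodule.sum_mem _ fun y _ => hall y (g y)

end MixedSchrodingerAux
/-- (Mixed Schrödinger model for the Heisenberg representation.)
Let `F` be a finite field of odd characteristic, `ψ : (F, +) → ℂ×` a character, and
`W_n = X_k ⊕ W_{n-k} ⊕ X̌_k` the standard symplectic space as above.  Given a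
representation `(ρ₀, S)` of `H(W_{n-k})` with `ρ₀(0, t) = ψ(t)·id`, the formula
`(ρ(w, t) f)(yv) = ψ(⟨yv, x⟩ + ⟨x̌, x⟩/2 + t) · ρ₀(w₀, 0)(f(x̌ + yv))`, for
`w = x + w₀ + x̌`, defines a representation `ρ` of `H(W_n)` on `S(X̌_k, S)` with
`ρ(0, t) = ψ(t)·id`; moreover `ρ` is irreducible whenever `ψ` is nontrivial and
`ρ₀` is irreducible. -/
theorem mixed_schrodinger_model {F : Type*} [Field F] [Fintype F]
    (h2 : (2 : F) ≠ 0) (ψ : AddChar F ℂ) (n k : ℕ) (hk : k ≤ n)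
    {S : Type*} [AddCommGroup S] [Module ℂ S] [FiniteDimensional ℂ S]
    (ρ₀ : Representation ℂ (Heisenberg (symplForm F (n - k))) S)
    (hρ₀ : ∀ t : F, ρ₀ ⟨0, t⟩ = ψ t • (1 : S →ₗ[ℂ] S)) :
    ∃ ρ : Representation ℂ (Heisenberg (wittForm F n k)) ((Fin k → F) → S),
      (∀ (w : WittSpace F n k) (t : F) (f : (Fin k → F) → S) (yv : Fin k → F),
        ρ ⟨w, t⟩ f yv =
          ψ (wittForm F n k (0, 0, yv) (w.1, 0, 0) +
              wittForm F n k (0, 0, w.2.2) (w.1, 0, 0) / 2 + t) •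
            ρ₀ ⟨w.2.1, 0⟩ (f (w.2.2 + yv))) ∧
      (∀ t : F, ρ ⟨0, t⟩ = ψ t • (1 : ((Fin k → F) → S) →ₗ[ℂ] ((Fin k → F) → S))) ∧
      ((∃ t : F, ψ t ≠ 1) → IsIrreducibleRep ρ₀ → IsIrreducibleRep ρ) := by
  classical
  have hρ₀one : ρ₀ ⟨0, 0⟩ = 1 := by rw [hρ₀ 0]; simp
  have hρ₀' : ∀ (w : (Fin (n - k) → F) × (Fin (n - k) → F)) (t : F),
      ρ₀ ⟨w, t⟩ = ψ t • ρ₀ ⟨w, 0⟩ := by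
    intro w t
    have h : (⟨w, t⟩ : Heisenberg (symplForm F (n - k))) = ⟨0, t⟩ * ⟨w, 0⟩ := by
      rw [heis_mul_def]; ext <;> simp
    rw [h, map_mul, hρ₀, smul_mul_assoc, one_mul]
  have hcomp : ∀ (u v : (Fin (n - k) → F) × (Fin (n - k) → F)) (s : S),
      ρ₀ ⟨u, 0⟩ (ρ₀ ⟨v, 0⟩ s) = ψ (symplForm F (n - k) u v / 2) • ρ₀ ⟨u + v, 0⟩ s := by
    intro u v s
    have h : (⟨u, 0⟩ : Heisenberg (symplForm F (n - k))) * ⟨v, 0⟩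
        = ⟨u + v, symplForm F (n - k) u v / 2⟩ := by
      rw [heis_mul_def]; ext <;> simp
    rw [← Module.End.mul_apply, ← map_mul, h, hρ₀' (u + v), LinearMap.smul_apply]
  refine ⟨{ toFun := schrLin ψ n k ρ₀, map_one' := ?_, map_mul' := ?_ }, ?_, ?_, ?_⟩
  · refine LinearMap.ext fun f => funext fun yv => ?_
    rw [schrLin_apply]
    simp [heis_one_def, hρ₀one]
  · intro g h
    refine LinearMap.ext fun f => funext fun yv => ?_
    rw [Module.End.mul_apply, schrLin_apply, schrLin_apply, schrLin_apply, map_smul,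
      smul_smul, hcomp, smul_smul, heis_mul_def]
    simp only [Prod.fst_add, Prod.snd_add, Pi.add_apply]
    rw [← AddChar.map_add_eq_mul, ← AddChar.map_add_eq_mul]
    have harg : h.v.2.2 + (g.v.2.2 + yv) = g.v.2.2 + h.v.2.2 + yv := by abel
    rw [harg]
    congr 2
    simp only [wittForm, symplForm, dotForm, LinearMap.mk₂_apply, Pi.add_apply, add_mul,
      mul_add, Finset.sum_add_distrib]
    field_simp
    ring
  · intro w t f yv
    show schrLin ψ n k ρ₀ ⟨w, t⟩ f yv = _
    rw [schrLin_apply]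
    congr 2
    simp only [wittForm, dotForm, symplForm, LinearMap.mk₂_apply]
    simp
    ring
  · intro t
    refine LinearMap.ext fun f => funext fun yv => ?_
    show schrLin ψ n k ρ₀ ⟨0, t⟩ f yv = (ψ t • (1 : ((Fin k → F) → S) →ₗ[ℂ] ((Fin k → F) → S))) f yv
    rw [schrLin_apply]
    simp [hρ₀one]
  · intro hψ hirr
    exact schr_irred ψ n k ρ₀ hρ₀ _ (fun g f yv => schrLin_apply ψ n k ρ₀ g f yv) hψ hirr
end

section
/- Let F be a finite field of odd characteristic, let W = F^{2n} be equipped with a nondegenerate alternating F-bilinear form β, and let Sp(W) = { g ∈ GL(W) : β(g v, g w) = β(v, w) for all v, w ∈ W } be the symplectic group. Let Z be the set of F-linear maps x : F^k → W whose image is totally isotropic, i.e. β(x(u), x(v)) = 0 for all u, v ∈ F^k, and let GL_k(F) × Sp(W) act on Z by (a, g)·x = g ∘ x ∘ a⁻¹. Then two elements of Z lie in the same orbit if and only if they have the same rank, and the ranks attained on Z are exactly 0, 1, …, min(k, n). -/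
open Module Submodule

universe u v

section helpers

variable {F : Type v} [Field F]

lemma skew_of_alt {W : Type u} [AddCommGroup W] [Module F W]
    (β : W →ₗ[F] W →ₗ[F] F) (halt : ∀ w, β w w = 0) (v w : W) :
    β v w = - β w v := by
  have h := halt (v + w)
  simp only [map_add, LinearMap.add_apply, halt, zero_add, add_zero] at h
  exact eq_neg_of_add_eq_zero_left (by rw [add_comm]; exact h)

/-- Solve a system `β (v i) q = c i` for linearly independent `v` and nondegenerate `β`. -/
lemma exists_dual_vec {W : Type u} [AddCommGroup W] [Module F W] [FiniteDimensional F W]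
    (β : W →ₗ[F] W →ₗ[F] F) (hnd : ∀ v : W, (∀ w : W, β v w = 0) → v = 0)
    {r : ℕ} (v : Fin r → W) (hv : LinearIndependent F v) (c : Fin r → F) :
    ∃ q : W, ∀ i, β (v i) q = c i := by
  classical
  set T : W →ₗ[F] (Fin r → F) := LinearMap.pi (fun i => β (v i)) with hT
  have hsurj : Function.Surjective T := by
    rw [← LinearMap.range_eq_top]
    by_contra h
    obtain ⟨φ, hφ0, hφ⟩ := Submodule.exists_dual_map_eq_bot_of_lt_top
      (lt_top_iff_ne_top.2 h) inferInstance
    set a : Fin r → F := fun i => φ (fun j => if i = j then 1 else 0) with ha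
    have hφeval : ∀ y : Fin r → F, φ y = ∑ i, y i * a i := by
      intro y
      conv_lhs => rw [pi_eq_sum_univ y]
      rw [map_sum]
      refine Finset.sum_congr rfl fun i _ => ?_
      rw [map_smul, smul_eq_mul]
    have hψ : ∀ w : W, φ (T w) = 0 := by
      intro w
      have hmem : φ (T w) ∈ Submodule.map φ (LinearMap.range T) :=
        Submodule.mem_map_of_mem (LinearMap.mem_range_self T w)
      rw [hφ] at hmem
      exact (Submodule.mem_bot F).1 hmem
    have hzero : (∑ i, a i • v i) = 0 := by
      apply hnd
      intro w
      have : β (∑ i, a i • v i) w = ∑ i, (β (v i) w) * a i := by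
        rw [map_sum, LinearMap.sum_apply]
        refine Finset.sum_congr rfl fun i _ => ?_
        rw [map_smul, LinearMap.smul_apply, smul_eq_mul, mul_comm]
      have h2 : φ (T w) = ∑ i, (β (v i)) w * a i := by
        rw [hφeval (T w)]
        simp only [hT, LinearMap.pi_apply]
      rw [this, ← h2, hψ w]
    have haz : ∀ i, a i = 0 := Fintype.linearIndependent_iff.1 hv a hzero
    apply hφ0
    apply LinearMap.ext
    intro y
    rw [hφeval y]
    simp [haz]
  obtain ⟨q, hq⟩ := hsurj c
  exact ⟨q, fun i => congrFun hq i⟩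

lemma bilin_ext {W : Type u} [AddCommGroup W] [Module F W] {ι : Type*}
    (b : Basis ι F W) {B₁ B₂ : W →ₗ[F] W →ₗ[F] F}
    (h : ∀ i j, B₁ (b i) (b j) = B₂ (b i) (b j)) : B₁ = B₂ :=
  b.ext fun i => b.ext fun j => h i j

/-- The Darboux-basis statement for half-dimension `n`. -/
def DarbouxStatement (F : Type v) [Field F] (n : ℕ) : Prop :=
  ∀ (W : Type u) [AddCommGroup W] [Module F W] [FiniteDimensional F W]
    (β : W →ₗ[F] W →ₗ[F] F), (∀ w, β w w = 0) → (∀ v, (∀ w, β v w = 0) → v = 0) →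
    Module.finrank F W = 2 * n →
    ∀ (r : ℕ) (v : Fin r → W), LinearIndependent F v → (∀ i j, β (v i) (v j) = 0) →
    ∃ (hrn : r ≤ n) (b : Basis (Fin n ⊕ Fin n) F W),
      (∀ i j, β (b (.inl i)) (b (.inl j)) = 0) ∧
      (∀ i j, β (b (.inr i)) (b (.inr j)) = 0) ∧
      (∀ i j, β (b (.inl i)) (b (.inr j)) = if i = j then 1 else 0) ∧
      ∀ i : Fin r, b (.inl (Fin.castLE hrn i)) = v i

lemma darboux_glue {m : ℕ} (IH : DarbouxStatement.{u} F m)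
    (W : Type u) [AddCommGroup W] [Module F W] [FiniteDimensional F W]
    (β : W →ₗ[F] W →ₗ[F] F) (halt : ∀ w, β w w = 0)
    (hnd : ∀ v, (∀ w, β v w = 0) → v = 0)
    (hdim : finrank F W = 2 * (m + 1))
    (p q : W) (hpq : β p q = 1) {r' : ℕ} (v' : Fin r' → W)
    (hv' : LinearIndependent F v') (hiso' : ∀ i j, β (v' i) (v' j) = 0)
    (hpv : ∀ i, β p (v' i) = 0) (hqv : ∀ i, β q (v' i) = 0) :
    ∃ (hr' : r' ≤ m) (b : Basis (Fin (m+1) ⊕ Fin (m+1)) F W),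
      (∀ i j, β (b (.inl i)) (b (.inl j)) = 0) ∧
      (∀ i j, β (b (.inr i)) (b (.inr j)) = 0) ∧
      (∀ i j, β (b (.inl i)) (b (.inr j)) = if i = j then 1 else 0) ∧
      b (.inl 0) = p ∧
      ∀ i : Fin r', b (.inl (Fin.castLE hr' i).succ) = v' i := by
  classical
  have hsk : ∀ a b : W, β a b = - β b a := skew_of_alt β halt
  have hqp : β q p = -1 := by rw [hsk q p, hpq]
  set W' : Submodule F W := LinearMap.ker (β p) ⊓ LinearMap.ker (β q) with hW'
  have hmemW' : ∀ x : W, x ∈ W' ↔ β p x = 0 ∧ β q x = 0 := by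
    intro x
    simp [hW', Submodule.mem_inf, LinearMap.mem_ker]
  -- decomposition of an arbitrary vector
  have hdecomp : ∀ x : W, x + (β q x) • p - (β p x) • q ∈ W' := by
    intro x
    rw [hmemW']
    constructor
    · simp [map_add, map_sub, map_smul, halt, hpq, smul_eq_mul]
    · simp [map_add, map_sub, map_smul, halt, hpq, hqp, smul_eq_mul]
  have hsplit : ∀ x : W, x = ((-(β q x)) • p + (β p x) • q) + (x + (β q x) • p - (β p x) • q) := by
    intro x; module
  -- p, q linearly independent
  have hpqli : LinearIndependent F ![p, q] := by
    rw [LinearIndependent.pair_iff]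
    intro s t hst
    have h1 : β p (s • p + t • q) = t := by simp [map_add, map_smul, halt, hpq, smul_eq_mul]
    have h2 : β q (s • p + t • q) = -s := by
      simp [map_add, map_smul, halt, hqp, smul_eq_mul]
    rw [hst] at h1 h2
    simp only [map_zero] at h1 h2
    constructor
    · have := h2.symm; simpa using this.symm
    · exact h1.symm
  set H : Submodule F W := span F {p, q} with hH
  have hcompl : IsCompl H W' := by
    constructor
    · rw [disjoint_def]
      intro x hxH hxW'
      obtain ⟨c, d, rfl⟩ := Submodule.mem_span_pair.1 hxH
      obtain ⟨h1, h2⟩ := (hmemW' _).1 hxW'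
      have hd : d = 0 := by
        simpa [map_add, map_smul, halt, hpq, smul_eq_mul] using h1
      have hc : c = 0 := by
        have h3 : -c = 0 := by
          simpa [map_add, map_smul, halt, hqp, smul_eq_mul] using h2
        exact neg_eq_zero.mp h3
      simp [hc, hd]
    · rw [codisjoint_iff, eq_top_iff]
      intro x _
      rw [hsplit x]
      apply Submodule.add_mem
      · apply Submodule.mem_sup_left
        apply Submodule.add_mem
        · exact Submodule.smul_mem _ _ (Submodule.subset_span (by simp))
        · exact Submodule.smul_mem _ _ (Submodule.subset_span (by simp))
      · exact Submodule.mem_sup_right (hdecomp x)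
  -- dimension of W'
  have hHrank : finrank F H = 2 := by
    have : H = span F (Set.range ![p, q]) := by
      rw [hH]; congr 1
      ext z
      constructor
      · rintro (rfl | rfl)
        · exact ⟨0, rfl⟩
        · exact ⟨1, rfl⟩
      · rintro ⟨i, rfl⟩
        fin_cases i
        · left; rfl
        · right; rfl
    rw [this, finrank_span_eq_card hpqli]
    simp
  have hW'rank : finrank F (↥W') = 2 * m := by
    have := Submodule.finrank_add_eq_of_isCompl hcompl
    rw [hHrank, hdim] at this
    omega
  -- restricted form
  set β' : ↥W' →ₗ[F] ↥W' →ₗ[F] F := β.compl₁₂ W'.subtype W'.subtype with hβ'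
  have hβ'app : ∀ x y : ↥W', β' x y = β (x : W) (y : W) := fun x y => rfl
  have halt' : ∀ w : ↥W', β' w w = 0 := fun w => halt _
  have hmem1 : ∀ x : ↥W', β p (x : W) = 0 := fun x => ((hmemW' _).1 x.2).1
  have hmem2 : ∀ x : ↥W', β q (x : W) = 0 := fun x => ((hmemW' _).1 x.2).2
  have hnd' : ∀ x : ↥W', (∀ y : ↥W', β' x y = 0) → x = 0 := by
    intro x hx
    have e1 : β (x : W) p = 0 := by rw [hsk]; simp [hmem1 x]
    have e2 : β (x : W) q = 0 := by rw [hsk]; simp [hmem2 x]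
    have hxW : (x : W) = 0 := by
      apply hnd
      intro w
      have e3 : β (x : W) (w + (β q w) • p - (β p w) • q) = 0 := by
        have h4 := hx ⟨_, hdecomp w⟩
        rw [hβ'app] at h4
        exact h4
      have e4 : β (x : W) w =
          β (x : W) (w + (β q w) • p - (β p w) • q)
            - (β q w) * β (x : W) p + (β p w) * β (x : W) q := by
        simp only [map_add, map_sub, map_smul, smul_eq_mul]
        ring
      rw [e4, e3, e1, e2]; ring
    exact Subtype.ext hxW
  -- the tail family inside W'
  set v'' : Fin r' → ↥W' := fun i => ⟨v' i, (hmemW' _).2 ⟨hpv i, hqv i⟩⟩ with hv''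
  have hli'' : LinearIndependent F v'' := by
    apply LinearIndependent.of_comp W'.subtype
    convert hv' using 1
    rfl
  have hiso'' : ∀ i j, β' (v'' i) (v'' j) = 0 := fun i j => hiso' i j
  obtain ⟨hr'm, b', g1, g2, g3, g4⟩ := IH (↥W') β' halt' hnd' hW'rank r' v'' hli'' hiso''
  -- glue the basis
  set u : Fin (m+1) ⊕ Fin (m+1) → W :=
    Sum.elim (Fin.cases p (fun i => (b' (.inl i) : W)))
             (Fin.cases q (fun i => (b' (.inr i) : W))) with hu
  have hu_inl0 : u (.inl 0) = p := rfl
  have hu_inr0 : u (.inr 0) = q := rfl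
  have hu_inls : ∀ i : Fin m, u (.inl i.succ) = (b' (.inl i) : W) := by
    intro i; simp [hu]
  have hu_inrs : ∀ i : Fin m, u (.inr i.succ) = (b' (.inr i) : W) := by
    intro i; simp [hu]
  have hspan : ⊤ ≤ span F (Set.range u) := by
    have hWle : W' ≤ span F (Set.range u) := by
      intro w hw
      have hb'mem : (⟨w, hw⟩ : ↥W') ∈ span F (Set.range b') := by
        rw [b'.span_eq]; trivial
      have : w ∈ Submodule.map W'.subtype (span F (Set.range b')) :=
        ⟨⟨w, hw⟩, hb'mem, rfl⟩
      rw [Submodule.map_span] at this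
      refine Submodule.span_mono ?_ this
      rintro _ ⟨_, ⟨s, rfl⟩, rfl⟩
      rcases s with i | i
      · exact ⟨.inl i.succ, (hu_inls i).symm ▸ rfl⟩
      · exact ⟨.inr i.succ, (hu_inrs i).symm ▸ rfl⟩
    have hHle : H ≤ span F (Set.range u) := by
      rw [hH, Submodule.span_le]
      rintro x (rfl | rfl)
      · exact Submodule.subset_span ⟨.inl 0, rfl⟩
      · exact Submodule.subset_span ⟨.inr 0, rfl⟩
    calc ⊤ = H ⊔ W' := (codisjoint_iff.1 hcompl.codisjoint).symm
    _ ≤ _ := sup_le hHle hWle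
  have hcard : Fintype.card (Fin (m+1) ⊕ Fin (m+1)) = finrank F W := by
    simp [hdim]; omega
  set b : Basis (Fin (m+1) ⊕ Fin (m+1)) F W := basisOfTopLeSpanOfCardEqFinrank u hspan hcard
    with hb
  have hbu : ∀ s, b s = u s := by
    intro s
    rw [hb, coe_basisOfTopLeSpanOfCardEqFinrank]
  -- auxiliary values
  have hbp : ∀ s, β p (b' s : W) = 0 := fun s => hmem1 _
  have hbq : ∀ s, β q (b' s : W) = 0 := fun s => hmem2 _
  have hbp' : ∀ s, β (b' s : W) p = 0 := by intro s; rw [hsk]; simp [hbp s]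
  have hbq' : ∀ s, β (b' s : W) q = 0 := by intro s; rw [hsk]; simp [hbq s]
  refine ⟨Nat.lt_succ_iff.mp (Nat.lt_succ_of_le hr'm), b, ?_, ?_, ?_, ?_, ?_⟩
  · intro i j
    rw [hbu, hbu]
    induction i using Fin.cases with
    | zero =>
      induction j using Fin.cases with
      | zero => rw [hu_inl0]; exact halt p
      | succ j => rw [hu_inl0, hu_inls]; exact hbp _
    | succ i =>
      induction j using Fin.cases with
      | zero => rw [hu_inl0, hu_inls]; exact hbp' _
      | succ j => rw [hu_inls, hu_inls]; exact g1 i j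
  · intro i j
    rw [hbu, hbu]
    induction i using Fin.cases with
    | zero =>
      induction j using Fin.cases with
      | zero => rw [hu_inr0]; exact halt q
      | succ j => rw [hu_inr0, hu_inrs]; exact hbq _
    | succ i =>
      induction j using Fin.cases with
      | zero => rw [hu_inr0, hu_inrs]; exact hbq' _
      | succ j => rw [hu_inrs, hu_inrs]; exact g2 i j
  · intro i j
    rw [hbu, hbu]
    induction i using Fin.cases with
    | zero =>
      induction j using Fin.cases with
      | zero => rw [hu_inl0, hu_inr0, if_pos rfl]; exact hpq
      | succ j =>
        rw [hu_inl0, hu_inrs, if_neg (Fin.succ_ne_zero j).symm]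
        exact hbp _
    | succ i =>
      induction j using Fin.cases with
      | zero =>
        rw [hu_inr0, hu_inls, if_neg (Fin.succ_ne_zero i)]
        exact hbq' _
      | succ j =>
        rw [hu_inls, hu_inrs]
        have := g3 i j
        rw [hβ'app] at this
        rw [this]
        by_cases h : i = j
        · rw [if_pos h, if_pos (by rw [h])]
        · rw [if_neg h, if_neg (fun hc => h (Fin.succ_inj.1 hc))]
  · rw [hbu]; exact hu_inl0
  · intro i
    rw [hbu]
    have : (Fin.castLE (Nat.lt_succ_iff.mp (Nat.lt_succ_of_le hr'm)) i).succ
        = (Fin.castLE hr'm i).succ := rfl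
    rw [this, hu_inls]
    have := g4 i
    rw [this]

lemma darboux_statement (n : ℕ) : DarbouxStatement.{u} F n := by
  induction n with
  | zero =>
    intro W _ _ _ β halt hnd hdim r v hv hiso
    have hsub : Subsingleton W := by
      have h0 : finrank F W = 0 := by omega
      exact Module.finrank_zero_iff.mp h0
    cases r with
    | zero =>
      refine ⟨le_refl 0, Basis.empty W, ?_, ?_, ?_, ?_⟩ <;> intro i <;> exact i.elim0
    | succ r =>
      exact absurd (Subsingleton.elim (v 0) 0) (hv.ne_zero 0)
  | succ m IH =>
    intro W _ _ _ β halt hnd hdim r v hv hiso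
    cases r with
    | zero =>
      have hpos : 0 < finrank F W := by omega
      have hnt : Nontrivial W := Module.finrank_pos_iff.mp hpos
      obtain ⟨p, hp⟩ := exists_ne (0 : W)
      obtain ⟨w, hw⟩ : ∃ w, β p w ≠ 0 := by
        by_contra h
        push_neg at h
        exact hp (hnd p h)
      have hpq : β p ((β p w)⁻¹ • w) = 1 := by
        rw [map_smul, smul_eq_mul, inv_mul_cancel₀ hw]
      obtain ⟨hr', b, G1, G2, G3, _, _⟩ :=
        darboux_glue IH W β halt hnd hdim p _ hpq Fin.elim0
          linearIndependent_empty_type (fun i => i.elim0) (fun i => i.elim0) (fun i => i.elim0)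
      exact ⟨Nat.zero_le _, b, G1, G2, G3, fun i => i.elim0⟩
    | succ r' =>
      obtain ⟨q, hq⟩ := exists_dual_vec β hnd v hv (fun i => if i = 0 then 1 else 0)
      have hpq : β (v 0) q = 1 := by simpa using hq 0
      have hv2 : LinearIndependent F (fun i : Fin r' => v i.succ) :=
        hv.comp Fin.succ (Fin.succ_injective r')
      have hiso2 : ∀ (i j : Fin r'), β (v i.succ) (v j.succ) = 0 := fun i j => hiso _ _
      have hpv2 : ∀ i : Fin r', β (v 0) (v i.succ) = 0 := fun i => hiso 0 i.succ
      have hqv2 : ∀ i : Fin r', β q (v i.succ) = 0 := by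
        intro i
        rw [skew_of_alt β halt]
        have h5 := hq i.succ
        rw [if_neg (Fin.succ_ne_zero i)] at h5
        simp [h5]
      obtain ⟨hr', b, G1, G2, G3, hbp, hbs⟩ :=
        darboux_glue IH W β halt hnd hdim (v 0) q hpq (fun i : Fin r' => v i.succ)
          hv2 hiso2 hpv2 hqv2
      refine ⟨Nat.succ_le_succ hr', b, G1, G2, G3, ?_⟩
      intro i
      induction i using Fin.cases with
      | zero => exact hbp
      | succ j => exact hbs j

set_option maxHeartbeats 1600000 in
/-- Let `F` be a finite field of odd characteristic, `W = F^{2n}`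
a symplectic space with nondegenerate alternating form `β`, and let `Z` be the set
of linear maps `x : F^k → W` with totally isotropic image, on which
`GL_k(F) × Sp(W)` acts by `(a, g) · x = g ∘ x ∘ a⁻¹`.  Then two elements of `Z` lie
in the same orbit if and only if they have the same rank, and the ranks attained on
`Z` are exactly `0, 1, …, min(k, n)`. -/
theorem isotropic_maps_orbits {F W : Type*} [Field F] [Fintype F]
    (h2 : (2 : F) ≠ 0)
    [AddCommGroup W] [Module F W] [FiniteDimensional F W] (n k : ℕ)
    (hdim : Module.finrank F W = 2 * n)
    (β : W →ₗ[F] W →ₗ[F] F)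
    (halt : ∀ w : W, β w w = 0)
    (hnd : ∀ v : W, (∀ w : W, β v w = 0) → v = 0) :
    (∀ x y : (Fin k → F) →ₗ[F] W,
      (∀ u v, β (x u) (x v) = 0) → (∀ u v, β (y u) (y v) = 0) →
      ((∃ (a : (Fin k → F) ≃ₗ[F] (Fin k → F)) (g : W ≃ₗ[F] W),
          (∀ v w : W, β (g v) (g w) = β v w) ∧
          y = g.toLinearMap ∘ₗ x ∘ₗ a.symm.toLinearMap) ↔
        Module.finrank F (LinearMap.range x) = Module.finrank F (LinearMap.range y))) ∧
    {r : ℕ | ∃ x : (Fin k → F) →ₗ[F] W,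
        (∀ u v, β (x u) (x v) = 0) ∧ Module.finrank F (LinearMap.range x) = r} =
      {r : ℕ | r ≤ min k n} := by
  classical
  obtain ⟨-, b₀, hb₀1, hb₀2, hb₀3, -⟩ :=
    darboux_statement (F := F) n W β halt hnd hdim 0 Fin.elim0
      linearIndependent_empty_type (fun i => i.elim0)
  have hsk : ∀ a b : W, β a b = - β b a := skew_of_alt β halt
  have hrangeiso : ∀ z : (Fin k → F) →ₗ[F] W, (∀ u v, β (z u) (z v) = 0) →
      ∀ a ∈ LinearMap.range z, ∀ c ∈ LinearMap.range z, β a c = 0 := by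
    rintro z hz _ ⟨u, rfl⟩ _ ⟨v, rfl⟩
    exact hz u v
  have hle : ∀ z : (Fin k → F) →ₗ[F] W, (∀ u v, β (z u) (z v) = 0) →
      finrank F (LinearMap.range z) ≤ n := by
    intro z hz
    set U := LinearMap.range z with hU
    set vb : Basis (Fin (finrank F ↥U)) F ↥U := finBasis F ↥U with hvb
    have hvli : LinearIndependent F (fun i => (vb i : W)) :=
      vb.linearIndependent.map' U.subtype (Submodule.ker_subtype U)
    have hviso : ∀ i j, β (vb i : W) (vb j : W) = 0 := fun i j =>
      hrangeiso z hz _ (vb i).2 _ (vb j).2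
    obtain ⟨hrn, -⟩ := darboux_statement (F := F) n W β halt hnd hdim _ _ hvli hviso
    exact hrn
  have hfk : finrank F (Fin k → F) = k := by
    simp [Module.finrank_pi]
  have hlek : ∀ z : (Fin k → F) →ₗ[F] W, finrank F (LinearMap.range z) ≤ k := by
    intro z
    have h := z.finrank_range_le
    rwa [hfk] at h
  constructor
  · intro x y hx hy
    constructor
    · rintro ⟨a, g, hg, rfl⟩
      have h1 : LinearMap.range (x ∘ₗ a.symm.toLinearMap) = LinearMap.range x :=
        LinearMap.range_comp_of_range_eq_top _ (LinearEquiv.range a.symm)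
      have h2 : LinearMap.range (g.toLinearMap ∘ₗ x ∘ₗ a.symm.toLinearMap)
          = Submodule.map g.toLinearMap (LinearMap.range x) := by
        rw [LinearMap.range_comp, h1]
      rw [h2, LinearEquiv.finrank_map_eq]
    · intro hr
      set r := finrank F (LinearMap.range x) with hrdef
      have hrn : r ≤ n := hle x hx
      have hrk : r ≤ k := hlek x
      set x₀ : (Fin k → F) →ₗ[F] W := (Pi.basisFun F (Fin k)).constr F
        (fun j => if h : (j : ℕ) < r then b₀ (.inl ⟨j, lt_of_lt_of_le h hrn⟩) else 0)
        with hx₀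
      have key : ∀ z : (Fin k → F) →ₗ[F] W, (∀ u v, β (z u) (z v) = 0) →
          finrank F (LinearMap.range z) = r →
          ∃ (a : (Fin k → F) ≃ₗ[F] (Fin k → F)) (g : W ≃ₗ[F] W),
            (∀ v w : W, β (g v) (g w) = β v w) ∧
            g.toLinearMap ∘ₗ z ∘ₗ a.symm.toLinearMap = x₀ := by
        intro z hz hzr
        set U := LinearMap.range z with hU
        set vb : Basis (Fin r) F ↥U := finBasisOfFinrankEq F ↥U hzr with hvb
        set v : Fin r → W := fun i => (vb i : W) with hv
        have hvli : LinearIndependent F v :=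
          vb.linearIndependent.map' U.subtype (Submodule.ker_subtype U)
        have hviso : ∀ i j, β (v i) (v j) = 0 := fun i j =>
          hrangeiso z hz _ (vb i).2 _ (vb j).2
        obtain ⟨hrn', b, G1, G2, G3, G4⟩ :=
          darboux_statement (F := F) n W β halt hnd hdim r v hvli hviso
        set g : W ≃ₗ[F] W := b.equiv b₀ (Equiv.refl _) with hgdef
        have hgb : ∀ s, g (b s) = b₀ s := by
          intro s
          rw [hgdef]
          simpa using b.equiv_apply s b₀ (Equiv.refl _)
        have hBeq : β.compl₁₂ g.toLinearMap g.toLinearMap = β := by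
          apply bilin_ext b
          intro s t
          have h6 : β (g (b s)) (g (b t)) = β (b s) (b t) := by
            rw [hgb, hgb]
            rcases s with i | i <;> rcases t with j | j
            · rw [hb₀1, G1]
            · rw [hb₀3, G3]
            · rw [hsk (b₀ (.inr i)) (b₀ (.inl j)), hsk (b (.inr i)) (b (.inl j)),
                hb₀3, G3]
            · rw [hb₀2, G2]
          simpa [LinearMap.compl₁₂_apply] using h6
        have hgbilin : ∀ vv ww : W, β (g vv) (g ww) = β vv ww := by
          intro vv ww
          have h7 := LinearMap.congr_fun (LinearMap.congr_fun hBeq vv) ww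
          simpa [LinearMap.compl₁₂_apply] using h7
        have hvmem : ∀ i, v i ∈ U := fun i => (vb i).2
        choose pfun hpfun using fun i => LinearMap.mem_range.mp (hvmem i)
        have hzpf : ∀ i, z (pfun i) = v i := hpfun
        have hpli : LinearIndependent F pfun := by
          apply LinearIndependent.of_comp z
          have : ⇑z ∘ pfun = v := funext hzpf
          rw [this]
          exact hvli
        have hrn2 := LinearMap.finrank_range_add_finrank_ker z
        rw [hzr, hfk] at hrn2
        have hker : finrank F ↥(LinearMap.ker z) = k - r := by omega
        set κ : Basis (Fin (k - r)) F ↥(LinearMap.ker z) := finBasisOfFinrankEq F _ hker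
          with hκ
        have hκli : LinearIndependent F (fun i => ((κ i) : Fin k → F)) :=
          κ.linearIndependent.map' (LinearMap.ker z).subtype
            (Submodule.ker_subtype _)
        have hspanκ : Submodule.span F (Set.range (fun i => ((κ i) : Fin k → F)))
            = LinearMap.ker z := by
          have h8 : (fun i => ((κ i) : Fin k → F)) = (LinearMap.ker z).subtype ∘ κ := rfl
          rw [h8, Set.range_comp, Submodule.span_image, κ.span_eq, Submodule.map_top,
            Submodule.range_subtype]
        have hdisj : Disjoint (Submodule.span F (Set.range pfun))
            (Submodule.span F (Set.range (fun i => ((κ i) : Fin k → F)))) := by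
          rw [hspanκ, Submodule.disjoint_def]
          intro w hw hwker
          obtain ⟨c, hc⟩ := (mem_span_range_iff_exists_fun F).1 hw
          have hzw : z w = 0 := hwker
          rw [← hc] at hzw ⊢
          have hzsum : z (∑ i, c i • pfun i) = ∑ i, c i • v i := by
            rw [map_sum]
            simp only [map_smul, hzpf]
          rw [hzsum] at hzw
          have hc0 : ∀ i, c i = 0 := Fintype.linearIndependent_iff.1 hvli c hzw
          simp [hc0]
        have hsli : LinearIndependent F
            (Sum.elim pfun (fun i => ((κ i) : Fin k → F))) :=
          hpli.sum_type hκli hdisj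
        set e : (Fin r ⊕ Fin (k - r)) ≃ Fin k :=
          finSumFinEquiv.trans (finCongr (by omega)) with he
        set u : Fin k → (Fin k → F) :=
          (Sum.elim pfun (fun i => ((κ i) : Fin k → F))) ∘ e.symm with hudef
        have huli : LinearIndependent F u := (linearIndependent_equiv e.symm).2 hsli
        have hucard : Fintype.card (Fin k) = finrank F (Fin k → F) := by
          rw [hfk]; simp
        have huspan : ⊤ ≤ Submodule.span F (Set.range u) := by
          have h10 : finrank F ↥(Submodule.span F (Set.range u)) = finrank F (Fin k → F) := by
            rw [finrank_span_eq_card huli, hfk]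
            simp
          exact ge_of_eq (Submodule.eq_top_of_finrank_eq h10)
        set ub : Basis (Fin k) F (Fin k → F) :=
          basisOfTopLeSpanOfCardEqFinrank u huspan hucard with hub
        have hubu : ∀ j, ub j = u j := by
          intro j
          rw [hub, coe_basisOfTopLeSpanOfCardEqFinrank]
        set a : (Fin k → F) ≃ₗ[F] (Fin k → F) :=
          ((Pi.basisFun F (Fin k)).equiv ub (Equiv.refl _)).symm with ha
        refine ⟨a, g, hgbilin, ?_⟩
        apply (Pi.basisFun F (Fin k)).ext
        intro j
        have hasymm : a.symm ((Pi.basisFun F (Fin k)) j) = u j := by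
          rw [ha, LinearEquiv.symm_symm]
          rw [Basis.equiv_apply]
          exact hubu j
        simp only [LinearMap.comp_apply, LinearEquiv.coe_coe]
        rw [hasymm]
        by_cases hj : (j : ℕ) < r
        · have hesymm : e.symm j = Sum.inl ⟨j, hj⟩ := by
            rw [Equiv.symm_apply_eq]
            apply Fin.ext
            rw [he]
            simp only [Equiv.trans_apply, finSumFinEquiv_apply_left, finCongr_apply,
              Fin.coe_cast, Fin.coe_castAdd]
          have hcomp : u j = pfun ⟨j, hj⟩ := by
            rw [hudef]
            simp only [Function.comp_apply, hesymm, Sum.elim_inl]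
          rw [hcomp, hzpf, ← G4 ⟨j, hj⟩, hgb]
          rw [hx₀, Basis.constr_basis, dif_pos hj]
          rfl
        · have hesymm : e.symm j = Sum.inr ⟨(j : ℕ) - r, by omega⟩ := by
            rw [Equiv.symm_apply_eq]
            apply Fin.ext
            rw [he]
            simp only [Equiv.trans_apply, finSumFinEquiv_apply_right, finCongr_apply,
              Fin.coe_cast, Fin.coe_natAdd]
            omega
          have hcomp : u j = ((κ ⟨(j : ℕ) - r, by omega⟩ : ↥(LinearMap.ker z)) : Fin k → F) := by
            rw [hudef]
            simp only [Function.comp_apply, hesymm, Sum.elim_inr]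
          rw [hcomp]
          have hker0 : z ((κ ⟨(j : ℕ) - r, by omega⟩ : ↥(LinearMap.ker z)) : Fin k → F) = 0 :=
            (κ _).2
          rw [hker0, map_zero]
          rw [hx₀, Basis.constr_basis, dif_neg hj]
      obtain ⟨a1, g1, hg1, he1⟩ := key x hx hrdef.symm
      obtain ⟨a2, g2, hg2, he2⟩ := key y hy hr.symm
      refine ⟨a1.trans a2.symm, g1.trans g2.symm, ?_, ?_⟩
      · intro vv ww
        have hg2' : ∀ uu ww : W, β (g2.symm uu) (g2.symm ww) = β uu ww := by
          intro uu ww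
          have h9 := hg2 (g2.symm uu) (g2.symm ww)
          rw [LinearEquiv.apply_symm_apply, LinearEquiv.apply_symm_apply] at h9
          exact h9.symm
        simp only [LinearEquiv.trans_apply]
        rw [hg2', hg1]
      · apply LinearMap.ext
        intro uu
        have t1 := LinearMap.congr_fun he1 (a2 uu)
        have t2 := LinearMap.congr_fun he2 (a2 uu)
        simp only [LinearMap.comp_apply, LinearEquiv.coe_coe] at t1 t2
        rw [LinearEquiv.symm_apply_apply] at t2
        simp only [LinearMap.comp_apply, LinearEquiv.coe_coe, LinearEquiv.trans_apply]
        have hsymmtrans : (a1.trans a2.symm).symm uu = a1.symm (a2 uu) := rfl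
        rw [hsymmtrans, t1, ← t2, LinearEquiv.symm_apply_apply]
  · ext r
    simp only [Set.mem_setOf_eq, le_min_iff]
    constructor
    · rintro ⟨x, hx, rfl⟩
      exact ⟨hlek x, hle x hx⟩
    · rintro ⟨hrk, hrn⟩
      set f : Fin k → W := fun j =>
        if h : (j : ℕ) < r then b₀ (.inl ⟨j, lt_of_lt_of_le h hrn⟩) else 0 with hf
      have hf0 : ∀ i j : Fin k, β (f i) (f j) = 0 := by
        intro i j
        by_cases hi : (i : ℕ) < r <;> by_cases hj : (j : ℕ) < r <;>
          simp [hf, hi, hj, hb₀1]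
      refine ⟨(Pi.basisFun F (Fin k)).constr F f, ?_, ?_⟩
      · intro uu vv
        rw [Basis.constr_apply_fintype, Basis.constr_apply_fintype]
        simp only [map_sum, LinearMap.sum_apply, map_smul, LinearMap.smul_apply,
          smul_eq_mul]
        simp [hf0]
      · rw [Basis.constr_range]
        have hspaneq : Submodule.span F (Set.range f)
            = Submodule.span F (Set.range (fun i : Fin r => b₀ (.inl (Fin.castLE hrn i)))) := by
          apply le_antisymm
          · rw [Submodule.span_le]
            rintro _ ⟨j, rfl⟩
            by_cases hj : (j : ℕ) < r
            · apply Submodule.subset_span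
              refine ⟨⟨j, hj⟩, ?_⟩
              rw [hf]
              simp only [dif_pos hj]
              congr 1
            · rw [hf]
              simp only [dif_neg hj]
              exact Submodule.zero_mem _
          · rw [Submodule.span_le]
            rintro _ ⟨i, rfl⟩
            apply Submodule.subset_span
            refine ⟨⟨(i : ℕ), lt_of_lt_of_le i.2 hrk⟩, ?_⟩
            rw [hf]
            simp only [i.2, dif_pos]
            congr 1
        rw [hspaneq, finrank_span_eq_card]
        · simp
        · exact b₀.linearIndependent.comp _
            (Sum.inl_injective.comp (Fin.castLE_injective hrn))

end helpers
end
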